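/- The pDPA set recursion holds: for k ≤ τ ≤ t-1, Set^τ_{k,t} = Set^τ_{k,t-1} ∩ I^τ_{k,t}, where Set^τ_{k,t} = {μ : Cost^τ_{k,t}(μ) = Cost*_{k,t}(μ)} and I^τ_{k,t} = {μ : Cost^τ_{k,t}(μ) ≤ C_{k-1,t}}. -/

import Mathlib

/-- The pDPA candidate cost function `Cost^τ_{k,t}(μ)`. -/
noncomputable def pdpaCost (y : ℕ → ℝ) (γ : ℝ → ℝ → ℝ) (Ck : ℕ → ℕ → ℝ)
    (k τ t : ℕ) (μ : ℝ) : ℝ :=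
  if τ = t then Ck (k - 1) t else Ck (k - 1) τ + ∑ i ∈ Finset.Ioc τ t, γ (y i) μ

/-- `Cost*_{k,t}(μ) = min over k ≤ τ ≤ t of Cost^τ_{k,t}(μ)` (junk value 0 if t < k). -/
noncomputable def pdpaCostStar (y : ℕ → ℝ) (γ : ℝ → ℝ → ℝ) (Ck : ℕ → ℕ → ℝ)
    (k t : ℕ) (μ : ℝ) : ℝ :=
  if h : k ≤ t then
    (Finset.Icc k t).inf' (Finset.nonempty_Icc.mpr h) (fun τ => pdpaCost y γ Ck k τ t μ)
  else 0

/-- `Set^τ_{k,t} = {μ : Cost^τ_{k,t}(μ) = Cost*_{k,t}(μ)}`. -/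
noncomputable def pdpaSet (y : ℕ → ℝ) (γ : ℝ → ℝ → ℝ) (Ck : ℕ → ℕ → ℝ)
    (k τ t : ℕ) : Set ℝ :=
  {μ | pdpaCost y γ Ck k τ t μ = pdpaCostStar y γ Ck k t μ}

/-- `I^τ_{k,t} = {μ : Cost^τ_{k,t}(μ) ≤ C_{k-1,t}}`. -/
noncomputable def pdpaI (y : ℕ → ℝ) (γ : ℝ → ℝ → ℝ) (Ck : ℕ → ℕ → ℝ)
    (k τ t : ℕ) : Set ℝ :=
  {μ | pdpaCost y γ Ck k τ t μ ≤ Ck (k - 1) t}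

/-- Adding a constant commutes with `inf'` in `ℝ`. -/
lemma inf'_add_const (s : Finset ℕ) (h : s.Nonempty) (f : ℕ → ℝ) (c : ℝ) :
    s.inf' h (fun x => f x + c) = s.inf' h f + c := by
  apply le_antisymm
  · obtain ⟨a, ha, hae⟩ := s.exists_mem_eq_inf' h f
    rw [hae]
    exact Finset.inf'_le _ ha
  · apply Finset.le_inf'
    intro b hb
    exact add_le_add_left (Finset.inf'_le _ hb) c

/-- One-step recursion for the candidate costs, `σ ≤ s`. -/
lemma pdpaCost_succ (y : ℕ → ℝ) (γ : ℝ → ℝ → ℝ) (Ck : ℕ → ℕ → ℝ)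
    (k σ s : ℕ) (hσ : σ ≤ s) (μ : ℝ) :
    pdpaCost y γ Ck k σ (s + 1) μ = pdpaCost y γ Ck k σ s μ + γ (y (s + 1)) μ := by
  unfold pdpaCost
  rcases eq_or_lt_of_le hσ with rfl | hlt
  · rw [if_pos rfl, if_neg (by omega)]
    rw [show Finset.Ioc σ (σ + 1) = {σ + 1} by
      ext x; simp only [Finset.mem_Ioc, Finset.mem_singleton]; omega]
    simp
  · rw [if_neg (by omega), if_neg (by omega)]
    rw [Finset.sum_Ioc_succ_top (le_of_lt hlt)]
    ring

/-- One-step recursion for `Cost*`. -/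
lemma pdpaCostStar_succ (y : ℕ → ℝ) (γ : ℝ → ℝ → ℝ) (Ck : ℕ → ℕ → ℝ)
    (k s : ℕ) (hks : k ≤ s) (μ : ℝ) :
    pdpaCostStar y γ Ck k (s + 1) μ
      = min (Ck (k - 1) (s + 1)) (pdpaCostStar y γ Ck k s μ + γ (y (s + 1)) μ) := by
  unfold pdpaCostStar
  rw [dif_pos (by omega : k ≤ s + 1), dif_pos hks]
  have hins : Finset.Icc k (s + 1) = insert (s + 1) (Finset.Icc k s) := by
    ext x; simp [Finset.mem_Icc, Finset.mem_insert]; omega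
  have hne : (Finset.Icc k s).Nonempty := Finset.nonempty_Icc.mpr hks
  have h1 : (Finset.Icc k s).inf' hne (fun σ => pdpaCost y γ Ck k σ (s + 1) μ)
      = (Finset.Icc k s).inf' hne (fun σ => pdpaCost y γ Ck k σ s μ) + γ (y (s + 1)) μ := by
    rw [Finset.inf'_congr hne rfl
      (fun σ hσ => pdpaCost_succ y γ Ck k σ s (Finset.mem_Icc.mp hσ).2 μ)]
    exact inf'_add_const _ hne _ _
  simp only [hins]
  rw [Finset.inf'_insert (H := hne), h1]
  rw [show pdpaCost y γ Ck k (s + 1) (s + 1) μ = Ck (k - 1) (s + 1) from if_pos rfl]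

/-- the pDPA set recursion `Set^τ_{k,t} = Set^τ_{k,t-1} ∩ I^τ_{k,t}`. -/
theorem pdpa_set_recursion (y : ℕ → ℝ) (γ : ℝ → ℝ → ℝ)
    (C : ℕ → ℕ → ℝ)
    (hC : ∀ τ t : ℕ, τ < t →
      IsLeast {x : ℝ | ∃ μ : ℝ, x = ∑ i ∈ Finset.Ioc τ t, γ (y i) μ} (C τ t))
    (Ck : ℕ → ℕ → ℝ) (hCk0 : ∀ t : ℕ, 1 ≤ t → Ck 0 t = C 0 t)
    (hrec : ∀ k T : ℕ, ∀ hk : 1 ≤ k, ∀ hT : k + 1 ≤ T,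
      Ck k T = (Finset.Ico k T).inf' (Finset.nonempty_Ico.mpr (by omega))
        (fun τ => Ck (k - 1) τ + C τ T))
    : ∀ k τ t : ℕ, 1 ≤ k → k ≤ τ → τ ≤ t - 1 → k + 1 ≤ t →
      pdpaSet y γ Ck k τ t = pdpaSet y γ Ck k τ (t - 1) ∩ pdpaI y γ Ck k τ t := by
  intro k τ t hk hkτ hτ hkt
  obtain ⟨s, rfl⟩ : ∃ s, t = s + 1 := ⟨t - 1, by omega⟩
  have hs : s + 1 - 1 = s := by omega
  rw [hs] at *
  have hτs : τ ≤ s := hτ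
  have hks : k ≤ s := le_trans hkτ hτs
  ext μ
  simp only [pdpaSet, pdpaI, Set.mem_inter_iff, Set.mem_setOf_eq]
  rw [pdpaCost_succ y γ Ck k τ s hτs μ, pdpaCostStar_succ y γ Ck k s hks μ]
  -- Star_s ≤ Cost^τ_{k,s}
  have hle : pdpaCostStar y γ Ck k s μ ≤ pdpaCost y γ Ck k τ s μ := by
    unfold pdpaCostStar
    rw [dif_pos hks]
    exact Finset.inf'_le _ (Finset.mem_Icc.mpr ⟨hkτ, hτs⟩)
  set A := pdpaCost y γ Ck k τ s μ
  set B := pdpaCostStar y γ Ck k s μ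
  set g := γ (y (s + 1)) μ
  set D := Ck (k - 1) (s + 1)
  constructor
  · intro h
    have h1 : A + g ≤ D := by rw [h]; exact min_le_left _ _
    have h2 : A + g ≤ B + g := by rw [h]; exact min_le_right _ _
    have : A ≤ B := by linarith
    exact ⟨le_antisymm this hle, h1⟩
  · rintro ⟨h1, h2⟩
    rw [h1]
    exact (min_eq_right (by linarith)).symm
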